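/- Let A ⊆ B be finite forests. Then A is weakly closed in B (A ≤ B) if and only if every path in B between two elements of A is entirely contained in A. -/

import Mathlib

open SimpleGraph

/-- The predimension of a finite set `A` of vertices: `|A| - e(A)`, where `e(A)` is the
number of edges of the induced subgraph on `A`. -/
noncomputable def delta {V : Type*} (G : SimpleGraph V) (A : Finset V) : ℤ :=
  (A.card : ℤ) - (Nat.card (G.induce (A : Set V)).edgeSet : ℤ)

/-- `A` is closed in `B` (`A ≤* B`): `A ⊆ B` and `δ(C) > δ(A)` for every finite `C` with
`A ⊊ C ⊆ B`. -/
def Closed {V : Type*} (G : SimpleGraph V) (A B : Finset V) : Prop :=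
  A ⊆ B ∧ ∀ C : Finset V, A ⊂ C → C ⊆ B → delta G A < delta G C

/-- `A` is weakly closed in `B` (`A ≤ B`). -/
def WClosed {V : Type*} (G : SimpleGraph V) (A B : Finset V) : Prop :=
  A ⊆ B ∧ ∀ C : Finset V, A ⊆ C → C ⊆ B → delta G A ≤ delta G C

/-- `A ≤* M` : `A` is closed in every finite superset inside the graph. -/
def ClosedIn {V : Type*} (G : SimpleGraph V) (A : Finset V) : Prop :=
  ∀ B : Finset V, A ⊆ B → Closed G A B

def WClosedIn {V : Type*} (G : SimpleGraph V) (A : Finset V) : Prop :=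
  ∀ B : Finset V, A ⊆ B → WClosed G A B

/-- `(A,B)` is a minimal pair. -/
def MinPair {V : Type*} (G : SimpleGraph V) (A B : Finset V) : Prop :=
  A ⊆ B ∧ (∀ C : Finset V, A ⊆ C → C ⊂ B → Closed G A C) ∧ ¬ Closed G A B

def WMinPair {V : Type*} (G : SimpleGraph V) (A B : Finset V) : Prop :=
  A ⊆ B ∧ (∀ C : Finset V, A ⊆ C → C ⊂ B → WClosed G A C) ∧ ¬ WClosed G A B

/-- `B` is an intrinsic extension of `A`. -/
def IntrinsicExt {V : Type*} (G : SimpleGraph V) (A B : Finset V) : Prop :=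
  A ⊆ B ∧ ∀ C : Finset V, A ⊆ C → C ⊂ B → ¬ Closed G C B

def WIntrinsicExt {V : Type*} (G : SimpleGraph V) (A B : Finset V) : Prop :=
  A ⊆ B ∧ ∀ C : Finset V, A ⊆ C → C ⊂ B → ¬ WClosed G C B

/-- The closure `cl*_M(N)`. -/
def clStar {V : Type*} (G : SimpleGraph V) (N : Set V) : Set V :=
  {b | ∃ A E : Finset V, (A : Set V) ⊆ N ∧ IntrinsicExt G A E ∧ b ∈ E}

/-- The weak closure `cl_M(N)`. -/
def clWeak {V : Type*} (G : SimpleGraph V) (N : Set V) : Set V :=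
  {b | ∃ A E : Finset V, (A : Set V) ⊆ N ∧ WIntrinsicExt G A E ∧ b ∈ E}

section Helpers
variable {V : Type*} {G : SimpleGraph V}

/-- The set of edges of `G` with both endpoints in `C`. -/
def edgesIn (G : SimpleGraph V) (C : Finset V) : Set (Sym2 V) :=
  {e | e ∈ G.edgeSet ∧ ∀ v ∈ e, v ∈ C}

lemma edgesIn_finite (C : Finset V) : (edgesIn G C).Finite := by
  apply Set.Finite.subset (Set.Finite.image (f := fun x : V × V => s(x.1, x.2))
    (((C : Set V) ×ˢ (C : Set V)).toFinite))
  rintro e ⟨-, he⟩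
  induction e with
  | h a b => exact ⟨(a, b), ⟨he a (by simp), he b (by simp)⟩, rfl⟩

lemma edgesIn_mono {C D : Finset V} (h : C ⊆ D) : edgesIn G C ⊆ edgesIn G D :=
  fun _ he => ⟨he.1, fun v hv => h (he.2 v hv)⟩

lemma delta_eq (C : Finset V) :
    delta G C = (C.card : ℤ) - ((edgesIn G C).ncard : ℤ) := by
  unfold delta
  congr 2
  rw [Nat.card_coe_set_eq,
    ← Set.ncard_image_of_injective _ (Sym2.map.injective (Subtype.val_injective))]
  congr 1
  ext e
  constructor
  · rintro ⟨e', he', rfl⟩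
    induction e' with
    | h a b =>
      refine ⟨?_, ?_⟩
      · exact (by exact he' : G.Adj a.1 b.1)
      · intro v hv
        rw [Sym2.map_pair_eq] at hv
        rcases Sym2.mem_iff.mp hv with rfl | rfl
        · exact a.2
        · exact b.2
  · intro he
    induction e with
    | h a b =>
      obtain ⟨he1, he2⟩ := he
      have ha : a ∈ C := he2 a (by simp)
      have hb : b ∈ C := he2 b (by simp)
      refine ⟨s(⟨a, ha⟩, ⟨b, hb⟩), ?_, by rw [Sym2.map_pair_eq]⟩
      exact (by exact he1 : G.Adj a b)

end Helpers


section Lift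
variable {V : Type*} {G : SimpleGraph V} {B : Finset V}

/-- The inclusion homomorphism from an induced subgraph. -/
def inclHom (G : SimpleGraph V) (s : Set V) : G.induce s →g G :=
  ⟨Subtype.val, fun {_ _} h => h⟩

lemma exists_lift {x y : V} (p : G.Walk x y) (hs : ∀ v ∈ p.support, v ∈ B)
    (hx : x ∈ B) (hy : y ∈ B) :
    ∃ q : (G.induce (B : Set V)).Walk ⟨x, hx⟩ ⟨y, hy⟩,
      q.map (inclHom G (B : Set V)) = p := by
  induction p with
  | nil => exact ⟨Walk.nil, by simp [inclHom]⟩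
  | @cons x b y h r ih =>
    have hb : b ∈ B := hs b (by simp)
    obtain ⟨q, hq⟩ := ih (fun v hv => hs v (by simp [hv])) hb hy
    exact ⟨Walk.cons (by exact h) q, by subst hq; rfl⟩

lemma path_unique_in (hB : (G.induce (B : Set V)).IsAcyclic) {x y : V}
    (p q : G.Walk x y) (hp : p.IsPath) (hq : q.IsPath)
    (hps : ∀ v ∈ p.support, v ∈ B) (hqs : ∀ v ∈ q.support, v ∈ B) : p = q := by
  have hx : x ∈ B := hps x p.start_mem_support
  have hy : y ∈ B := hps y p.end_mem_support
  obtain ⟨p', hp'⟩ := exists_lift p hps hx hy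
  obtain ⟨q', hq'⟩ := exists_lift q hqs hx hy
  have hp'path : p'.IsPath := Walk.IsPath.of_map (f := inclHom G (B : Set V)) (hp' ▸ hp)
  have hq'path : q'.IsPath := Walk.IsPath.of_map (f := inclHom G (B : Set V)) (hq' ▸ hq)
  have := hB.path_unique ⟨p', hp'path⟩ ⟨q', hq'path⟩
  rw [← hp', ← hq', Subtype.mk_eq_mk.mp this]

end Lift

set_option linter.unusedSectionVars false
section Endpt
variable {V : Type*} [DecidableEq V] {G : SimpleGraph V} {B : Finset V}

lemma end_not_mem_takeUntil {x y u : V} (p : G.Walk x y) (hp : p.IsPath)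
    (hus : u ∈ p.support) (hne : u ≠ y) : y ∉ (p.takeUntil u hus).support := by
  intro hy
  have hnd := hp.support_nodup
  rw [← p.take_spec hus, Walk.support_append] at hnd
  have hyd : y ∈ (p.dropUntil u hus).support.tail := by
    have h1 := (p.dropUntil u hus).end_mem_support
    rw [Walk.support_eq_cons] at h1
    rcases List.mem_cons.mp h1 with h1 | h1
    · exact absurd h1.symm hne
    · exact h1
  exact (List.disjoint_of_nodup_append hnd) hy hyd

lemma concat_isPath {x y u : V} {p : G.Walk x y} (hp : p.IsPath) (h : G.Adj y u)
    (hu : u ∉ p.support) : (p.concat h).IsPath := by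
  rw [← Walk.isPath_reverse_iff, Walk.reverse_concat]
  exact (hp.reverse).cons (by simpa using hu)

/-- At an endpoint of a path in a forest, all neighbours lying on the path coincide. -/
lemma endpoint_unique_nbr (hB : (G.induce (B : Set V)).IsAcyclic) {x y : V}
    (p : G.Walk x y) (hp : p.IsPath) (hsup : ∀ v ∈ p.support, v ∈ B)
    {u u' : V} (hu : G.Adj y u) (hu' : G.Adj y u')
    (hus : u ∈ p.support) (hu's : u' ∈ p.support) : u = u' := by
  have key : ∀ (u : V) (hu : G.Adj y u) (hus : u ∈ p.support),
      p = (p.takeUntil u hus).concat hu.symm := by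
    intro u hu hus
    have hne : u ≠ y := fun h => G.irrefl (h ▸ hu)
    have hty := end_not_mem_takeUntil p hp hus hne
    have hpath2 : ((p.takeUntil u hus).concat hu.symm).IsPath :=
      concat_isPath (hp.takeUntil hus) hu.symm hty
    refine path_unique_in hB _ _ hp hpath2 hsup ?_
    intro v hv
    rw [Walk.support_concat] at hv
    rw [List.mem_append] at hv
    rcases hv with hv | hv
    · exact hsup v (p.support_takeUntil_subset hus hv)
    · rw [List.mem_singleton] at hv
      exact hv ▸ hsup y p.end_mem_support
  have h1 := key u hu hus
  have h2 := key u' hu' hu's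
  obtain ⟨hv, -⟩ := Walk.concat_inj (h1.symm.trans h2)
  exact hv

end Endpt

section Seg
variable {V : Type*} {G : SimpleGraph V} {A : Finset V}

lemma seg_prefix : ∀ {b a' : V} (q : G.Walk b a'), q.IsPath → b ∉ A → a' ∈ A →
    ∃ (c : V) (r : G.Walk b c), r.IsPath ∧ c ∈ A ∧
      (∀ v ∈ r.support, v ∈ q.support) ∧ (∀ e ∈ r.edges, ∃ v, v ∈ e ∧ v ∉ A) := by
  intro b a' q
  induction q with
  | nil => intro _ hb ha'; exact absurd ha' hb
  | @cons b d a' h r' ih =>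
    intro hq hb ha'
    by_cases hd : d ∈ A
    · refine ⟨d, Walk.cons h Walk.nil, ?_, hd, ?_, ?_⟩
      · simp only [Walk.isPath_def, Walk.support_cons, Walk.support_nil]
        exact List.nodup_cons.mpr ⟨by simp only [List.mem_singleton]; exact fun hbd : b = d => hb (hbd ▸ hd), List.nodup_singleton d⟩
      · intro v hv
        simp only [Walk.support_cons, Walk.support_nil, List.mem_cons, List.mem_singleton] at hv ⊢
        rcases hv with rfl | hv
        · exact Or.inl rfl
        · exact Or.inr (by simp at hv; exact hv ▸ r'.start_mem_support)
      · intro e he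
        simp only [Walk.edges_cons, Walk.edges_nil, List.mem_singleton] at he
        exact ⟨b, by simp [he], hb⟩
    · obtain ⟨c, r'', hr''p, hc, hsub, hedge⟩ := ih hq.of_cons hd ha'
      have hbr : b ∉ r''.support := fun hm =>
        ((Walk.cons_isPath_iff h r').mp hq).2 (hsub b hm)
      refine ⟨c, Walk.cons h r'', hr''p.cons hbr, hc, ?_, ?_⟩
      · intro v hv
        simp only [Walk.support_cons, List.mem_cons] at hv ⊢
        rcases hv with rfl | hv
        · exact Or.inl rfl
        · exact Or.inr (hsub v hv)
      · intro e he
        simp only [Walk.edges_cons, List.mem_cons] at he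
        rcases he with rfl | he
        · exact ⟨b, by simp, hb⟩
        · exact hedge e he

lemma seg_main : ∀ {a a' : V} (p : G.Walk a a'), p.IsPath → a ∈ A → a' ∈ A →
    (∃ v ∈ p.support, v ∉ A) →
    ∃ (x y : V) (q : G.Walk x y), q.IsPath ∧ x ∈ A ∧ y ∈ A ∧ x ≠ y ∧
      (∀ v ∈ q.support, v ∈ p.support) ∧ (∀ e ∈ q.edges, ∃ v, v ∈ e ∧ v ∉ A) := by
  intro a a' p
  induction p with
  | nil =>
    rintro _ ha _ ⟨v, hv, hvA⟩
    rw [Walk.support_nil, List.mem_singleton] at hv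
    exact absurd (hv ▸ ha) hvA
  | @cons a b a' h q ih =>
    rintro hp ha ha' ⟨v, hv, hvA⟩
    by_cases hb : b ∈ A
    · by_cases hqA : ∃ v ∈ q.support, v ∉ A
      · obtain ⟨x, y, r, h1, h2, h3, h4, h5, h6⟩ := ih hp.of_cons hb ha' hqA
        exact ⟨x, y, r, h1, h2, h3, h4,
          fun v hv => by simp [Walk.support_cons]; exact Or.inr (h5 v hv), h6⟩
      · push_neg at hqA
        rw [Walk.support_cons, List.mem_cons] at hv
        rcases hv with rfl | hv
        · exact absurd ha hvA
        · exact absurd (hqA v hv) hvA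
    · obtain ⟨c, r, hrp, hc, hsub, hedge⟩ := seg_prefix q hp.of_cons hb ha'
      have har : a ∉ r.support := fun hm =>
        ((Walk.cons_isPath_iff h q).mp hp).2 (hsub a hm)
      refine ⟨a, c, Walk.cons h r, hrp.cons har, ha, hc,
        fun hac => har (hac ▸ r.end_mem_support), ?_, ?_⟩
      · intro v hv
        simp only [Walk.support_cons, List.mem_cons] at hv ⊢
        rcases hv with rfl | hv
        · exact Or.inl rfl
        · exact Or.inr (hsub v hv)
      · intro e he
        simp only [Walk.edges_cons, List.mem_cons] at he
        rcases he with rfl | he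
        · exact ⟨b, by simp, hb⟩
        · exact hedge e he

end Seg

section Count
variable {V : Type*} [DecidableEq V] {G : SimpleGraph V}

lemma mem_support_of_mem_edge {x y v : V} (q : G.Walk x y) {e : Sym2 V}
    (he : e ∈ q.edges) (hv : v ∈ e) : v ∈ q.support := by
  induction e with
  | h a b =>
    rcases Sym2.mem_iff.mp hv with rfl | rfl
    · exact q.fst_mem_support_of_mem_edges he
    · exact q.snd_mem_support_of_mem_edges he

lemma delta_lt_of_segment {A : Finset V} {x y : V} (q : G.Walk x y) (hq : q.IsPath)
    (hx : x ∈ A) (hy : y ∈ A) (hxy : x ≠ y)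
    (hedges : ∀ e ∈ q.edges, ∃ v, v ∈ e ∧ v ∉ A) :
    delta G (A ∪ q.support.toFinset) < delta G A := by
  set S := q.support.toFinset with hS
  set C := A ∪ S with hC
  set k := q.length with hk
  have hScard : S.card = k + 1 := by
    rw [hS, List.toFinset_card_of_nodup hq.support_nodup, Walk.length_support]
  -- vertex count
  have hinter : 2 ≤ (S ∩ A).card := by
    have : ({x, y} : Finset V) ⊆ S ∩ A := by
      intro v hv
      rcases Finset.mem_insert.mp hv with rfl | hv
      · exact Finset.mem_inter.mpr ⟨List.mem_toFinset.mpr q.start_mem_support, hx⟩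
      · rw [Finset.mem_singleton] at hv
        exact hv ▸ Finset.mem_inter.mpr ⟨List.mem_toFinset.mpr q.end_mem_support, hy⟩
    calc 2 = ({x, y} : Finset V).card := (Finset.card_pair hxy).symm
      _ ≤ _ := Finset.card_le_card this
  have hCcard : C.card + 2 ≤ A.card + k + 1 := by
    have h1 : C.card = A.card + (S \ A).card := by
      rw [hC, Finset.union_comm, ← Finset.sdiff_union_self_eq_union,
        Finset.card_union_of_disjoint (Finset.sdiff_disjoint), add_comm]
    have h2 := Finset.card_sdiff_add_card_inter S A
    omega
  -- edge count
  have hecard : (edgesIn G A).ncard + k ≤ (edgesIn G C).ncard := by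
    set P : Set (Sym2 V) := ↑q.edges.toFinset with hP
    have hPsub : P ⊆ edgesIn G C := by
      intro e he
      rw [hP, Finset.mem_coe, List.mem_toFinset] at he
      exact ⟨q.edges_subset_edgeSet he, fun v hv => Finset.mem_union.mpr
        (Or.inr (List.mem_toFinset.mpr (mem_support_of_mem_edge q he hv)))⟩
    have hdisj : Disjoint (edgesIn G A) P := by
      rw [Set.disjoint_right]
      intro e he
      rw [hP, Finset.mem_coe, List.mem_toFinset] at he
      obtain ⟨v, hv, hvA⟩ := hedges e he
      exact fun hmem => hvA (hmem.2 v hv)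
    have hPcard : P.ncard = k := by
      rw [hP, Set.ncard_coe_finset, List.toFinset_card_of_nodup hq.edges_nodup,
        Walk.length_edges]
    calc (edgesIn G A).ncard + k = (edgesIn G A ∪ P).ncard := by
          rw [Set.ncard_union_eq hdisj (edgesIn_finite A) (Set.toFinite _), hPcard]
      _ ≤ (edgesIn G C).ncard := Set.ncard_le_ncard
          (Set.union_subset (edgesIn_mono Finset.subset_union_left) hPsub)
          (edgesIn_finite C)
  rw [delta_eq, delta_eq]
  have c1 : ((C.card : ℤ)) + 2 ≤ (A.card : ℤ) + k + 1 := by exact_mod_cast hCcard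
  have c2 : ((edgesIn G A).ncard : ℤ) + k ≤ ((edgesIn G C).ncard : ℤ) := by
    exact_mod_cast hecard
  linarith

lemma delta_erase_le {C : Finset V} {w : V} (hw : w ∈ C)
    (hnbr : ∀ u ∈ C, ∀ u' ∈ C, G.Adj w u → G.Adj w u' → u = u') :
    delta G (C.erase w) ≤ delta G C := by
  set I : Set (Sym2 V) := {e | e ∈ edgesIn G C ∧ w ∈ e} with hI
  have hIsub : I.Subsingleton := by
    rintro e ⟨⟨heE, heC⟩, hew⟩ f ⟨⟨hfE, hfC⟩, hfw⟩
    have h1 := Sym2.other_spec hew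
    have h2 := Sym2.other_spec hfw
    have heq : Sym2.Mem.other hew = Sym2.Mem.other hfw := by
      apply hnbr _ (heC _ (Sym2.other_mem hew)) _ (hfC _ (Sym2.other_mem hfw))
      · rw [← SimpleGraph.mem_edgeSet, h1]; exact heE
      · rw [← SimpleGraph.mem_edgeSet, h2]; exact hfE
    rw [← h1, ← h2, heq]
  have hsub : edgesIn G C ⊆ edgesIn G (C.erase w) ∪ I := by
    rintro e ⟨heE, heC⟩
    by_cases hw' : w ∈ e
    · exact Or.inr ⟨⟨heE, heC⟩, hw'⟩
    · exact Or.inl ⟨heE, fun v hv =>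
        Finset.mem_erase.mpr ⟨fun h => hw' (h ▸ hv), heC v hv⟩⟩
  have hIcard : I.ncard ≤ 1 := by
    rcases hIsub.eq_empty_or_singleton with h | ⟨e, h⟩
    · simp [h]
    · simp [h]
  have hecard : (edgesIn G C).ncard ≤ (edgesIn G (C.erase w)).ncard + 1 := by
    calc (edgesIn G C).ncard ≤ (edgesIn G (C.erase w) ∪ I).ncard :=
          Set.ncard_le_ncard hsub ((edgesIn_finite _).union
            ((edgesIn_finite C).subset (fun e he => he.1)))
      _ ≤ (edgesIn G (C.erase w)).ncard + I.ncard := Set.ncard_union_le _ _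
      _ ≤ _ := by omega
  have hcard : C.card = (C.erase w).card + 1 := by
    rw [Finset.card_erase_of_mem hw]
    have := Finset.card_pos.mpr ⟨w, hw⟩
    omega
  rw [delta_eq, delta_eq]
  have c1 : ((C.card : ℤ)) = ((C.erase w).card : ℤ) + 1 := by exact_mod_cast hcard
  have c2 : ((edgesIn G C).ncard : ℤ) ≤ ((edgesIn G (C.erase w)).ncard : ℤ) + 1 := by
    exact_mod_cast hecard
  have c3 : edgesIn G (C.erase w) ⊆ edgesIn G C := edgesIn_mono (Finset.erase_subset w C)
  have c4 : ((edgesIn G (C.erase w)).ncard : ℤ) ≤ ((edgesIn G C).ncard : ℤ) := by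
    exact_mod_cast Set.ncard_le_ncard c3 (edgesIn_finite C)
  linarith

end Count

section Main
variable {V : Type*} {G : SimpleGraph V}

lemma exists_low_degree {A B C : Finset V}
    (hB : (G.induce (B : Set V)).IsAcyclic)
    (H : ∀ a a' : V, a ∈ A → a' ∈ A → ∀ p : G.Walk a a', p.IsPath →
      (∀ v ∈ p.support, v ∈ B) → ∀ v ∈ p.support, v ∈ A)
    (hCB : C ⊆ B) (hnot : ¬ C ⊆ A) :
    ∃ w ∈ C, w ∉ A ∧ ∀ u ∈ C, ∀ u' ∈ C, G.Adj w u → G.Adj w u' → u = u' := by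
  classical
  obtain ⟨v0, hv0C, hv0A⟩ : ∃ v0, v0 ∈ C ∧ v0 ∉ A := by
    rcases Finset.not_subset.mp hnot with ⟨v0, h1, h2⟩; exact ⟨v0, h1, h2⟩
  set P : ℕ → Prop := fun n => ∃ (x y : V) (p : G.Walk x y), p.IsPath ∧
    (∀ v ∈ p.support, v ∈ C) ∧ v0 ∈ p.support ∧ p.length = n with hPdef
  have hbound : ∀ m, P m → m + 1 ≤ C.card := by
    rintro m ⟨x, y, p, hp, hsup, -, hlen⟩
    have h1 : p.support.toFinset ⊆ C := fun v hv => hsup v (List.mem_toFinset.mp hv)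
    have h2 : p.support.toFinset.card = m + 1 := by
      rw [List.toFinset_card_of_nodup hp.support_nodup, Walk.length_support, hlen]
    rw [← h2]; exact Finset.card_le_card h1
  have hP0 : P 0 := ⟨v0, v0, Walk.nil, Walk.IsPath.nil, by
      intro v hv; rw [Walk.support_nil, List.mem_singleton] at hv; exact hv ▸ hv0C,
    by simp, rfl⟩
  set k := Nat.findGreatest P C.card with hkdef
  have hPk : P k := Nat.findGreatest_spec (Nat.zero_le _) hP0
  obtain ⟨x, y, p, hp, hsup, hv0, hlen⟩ := hPk
  have hnomore : ¬ P (k + 1) := fun hPk1 =>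
    Nat.findGreatest_is_greatest (n := C.card) (k := k+1) (by omega) (by have := hbound _ hPk1; omega) hPk1
  have hmaxy : ∀ u, G.Adj y u → u ∈ C → u ∈ p.support := by
    intro u hadj huC
    by_contra hus
    apply hnomore
    refine ⟨x, u, p.concat hadj, concat_isPath hp hadj hus, ?_, ?_, ?_⟩
    · intro v hv
      rw [Walk.support_concat, List.mem_append] at hv
      rcases hv with hv | hv
      · exact hsup v hv
      · rw [List.mem_singleton] at hv; exact hv ▸ huC
    · rw [Walk.support_concat, List.mem_append]
      exact Or.inl hv0
    · rw [Walk.length_concat, hlen]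
  have hmaxx : ∀ u, G.Adj x u → u ∈ C → u ∈ p.support := by
    intro u hadj huC
    by_contra hus
    apply hnomore
    refine ⟨u, y, Walk.cons hadj.symm p, hp.cons hus, ?_, ?_, ?_⟩
    · intro v hv
      rw [Walk.support_cons, List.mem_cons] at hv
      rcases hv with rfl | hv
      · exact huC
      · exact hsup v hv
    · rw [Walk.support_cons, List.mem_cons]; exact Or.inr hv0
    · rw [Walk.length_cons, hlen]
  have hsupB : ∀ v ∈ p.support, v ∈ B := fun v hv => hCB (hsup v hv)
  by_cases hyA : y ∈ A
  · by_cases hxA : x ∈ A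
    · exact absurd (H x y hxA hyA p hp hsupB v0 hv0) hv0A
    · refine ⟨x, hsup x p.start_mem_support, hxA, ?_⟩
      intro u hu u' hu' hadj hadj'
      have hsupB' : ∀ v ∈ p.reverse.support, v ∈ B := by
        intro v hv; rw [Walk.support_reverse, List.mem_reverse] at hv; exact hsupB v hv
      refine endpoint_unique_nbr hB p.reverse hp.reverse hsupB' hadj hadj' ?_ ?_
      · rw [Walk.support_reverse, List.mem_reverse]; exact hmaxx u hadj hu
      · rw [Walk.support_reverse, List.mem_reverse]; exact hmaxx u' hadj' hu'
  · refine ⟨y, hsup y p.end_mem_support, hyA, ?_⟩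
    intro u hu u' hu' hadj hadj'
    exact endpoint_unique_nbr hB p hp hsupB hadj hadj'
      (hmaxy u hadj hu) (hmaxy u' hadj' hu')

end Main

section Fin
variable {V : Type*} {G : SimpleGraph V}

lemma backward_key {A B : Finset V}
    (hB : (G.induce (B : Set V)).IsAcyclic)
    (H : ∀ a a' : V, a ∈ A → a' ∈ A → ∀ p : G.Walk a a', p.IsPath →
      (∀ v ∈ p.support, v ∈ B) → ∀ v ∈ p.support, v ∈ A) :
    ∀ (n : ℕ) (C : Finset V), C.card ≤ n → A ⊆ C → C ⊆ B → delta G A ≤ delta G C := by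
  classical
  intro n
  induction n with
  | zero =>
    intro C hc hAC hCB
    have hCe : C = ∅ := Finset.card_eq_zero.mp (Nat.le_zero.mp hc)
    have : A = C := Finset.Subset.antisymm hAC (by rw [hCe]; exact Finset.empty_subset A)
    rw [this]
  | succ n ih =>
    intro C hc hAC hCB
    by_cases hCA : C ⊆ A
    · rw [Finset.Subset.antisymm hAC hCA]
    · obtain ⟨w, hwC, hwA, hnbr⟩ := exists_low_degree hB H hCB hCA
      have hcardpos : 1 ≤ C.card := Finset.card_pos.mpr ⟨w, hwC⟩
      have herase : (C.erase w).card ≤ n := by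
        rw [Finset.card_erase_of_mem hwC]; omega
      have hAe : A ⊆ C.erase w := fun v hv =>
        Finset.mem_erase.mpr ⟨fun h => hwA (h ▸ hv), hAC hv⟩
      exact le_trans (ih (C.erase w) herase hAe
        (fun v hv => hCB (Finset.erase_subset w C hv)))
        (delta_erase_le hwC hnbr)

end Fin


/-- Let `A ⊆ B` be finite forests. Then `A` is weakly closed in `B`
(`A ≤ B`) iff every path in `B` between two elements of `A` is entirely contained
in `A`. -/
theorem stmt_12 {V : Type*} (G : SimpleGraph V) (A B : Finset V)
    (hAB : A ⊆ B) (hB : (G.induce (B : Set V)).IsAcyclic) :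
    WClosed G A B ↔
      ∀ a a' : V, a ∈ A → a' ∈ A → ∀ p : G.Walk a a', p.IsPath →
        (∀ v ∈ p.support, v ∈ B) → ∀ v ∈ p.support, v ∈ A := by
  classical
  constructor
  · intro hW a a' ha ha' p hp hpB
    by_contra hcon
    push_neg at hcon
    obtain ⟨v, hv, hvA⟩ := hcon
    obtain ⟨x, y, q, hq, hx, hy, hxy, hsub, hedges⟩ := seg_main p hp ha ha' ⟨v, hv, hvA⟩
    have hCB : A ∪ q.support.toFinset ⊆ B := by
      intro u hu
      rcases Finset.mem_union.mp hu with hu | hu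
      · exact hAB hu
      · exact hpB u (hsub u (List.mem_toFinset.mp hu))
    have h1 := hW.2 _ Finset.subset_union_left hCB
    have h2 := delta_lt_of_segment q hq hx hy hxy hedges
    linarith
  · intro H
    exact ⟨hAB, fun C hAC hCB => backward_key hB H C.card C le_rfl hAC hCB⟩
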